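/- For every triangulation T of a convex n-gon, the Scott permutation Scott(T) is the map i ↦ i + 2 (mod n); conversely, if Scott(T) equals i ↦ i+2 (mod n) for a tiling T, then T is a triangulation. -/

import Mathlib

open scoped Classical

/-!  Combinatorial model of tilings of a convex `n`-gon.
The vertices of the polygon are `ZMod n`, listed clockwise as `0,1,...,n-1`.
A tile is recorded as the finset of its vertices. -/

/-- The next vertex of `Q` strictly clockwise after `a`. -/
noncomputable def cnext (n : ℕ) (Q : Finset (ZMod n)) (a : ZMod n) : ZMod n :=
  if h : ∃ k : ℕ, 0 < k ∧ k ≤ n ∧ a + (k : ZMod n) ∈ Q then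
    a + ((Nat.find h : ℕ) : ZMod n)
  else a

/-- The previous vertex of `Q` strictly anticlockwise before `a`. -/
noncomputable def cprev (n : ℕ) (Q : Finset (ZMod n)) (a : ZMod n) : ZMod n :=
  if h : ∃ k : ℕ, 0 < k ∧ k ≤ n ∧ a - (k : ZMod n) ∈ Q then
    a - ((Nat.find h : ℕ) : ZMod n)
  else a

/-- `(a,b)` is a (directed, clockwise) edge of the tile `Q`:
`b` is the next vertex of `Q` clockwise after `a`. -/
noncomputable def IsEdge (n : ℕ) (Q : Finset (ZMod n)) (a b : ZMod n) : Prop :=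
  a ∈ Q ∧ b ∈ Q ∧ a ≠ b ∧ b = cnext n Q a

/-- `x` lies strictly inside the clockwise arc from `a` to `b`. -/
def Between (n : ℕ) (a x b : ZMod n) : Prop :=
  0 < (x - a).val ∧ (x - a).val < (b - a).val

/-- The chords `{a,b}` and `{c,d}` of a convex `m`-gon cross in its interior. -/
def Crosses (m : ℕ) (a b c d : ZMod m) : Prop :=
  Between m a c b ∧ Between m b d a

/-- A tiling of the convex `n`-gon by pairwise non-crossing diagonals, recorded by
its set of tiles.  Every tile has at least 3 vertices, every boundary edge
`[i,i+1]` is an edge of exactly one tile, every diagonal (non-boundary edge of a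
tile) is shared with exactly one other tile (traversed in the opposite
direction), two distinct tiles meet in at most one edge, and edges of tiles do
not cross. -/
structure PolygonTiling (n : ℕ) where
  tiles : Finset (Finset (ZMod n))
  three_le : ∀ Q ∈ tiles, 3 ≤ Q.card
  boundary_edge : ∀ i : ZMod n, ∃! Q, Q ∈ tiles ∧ IsEdge n Q i (i + 1)
  diag_shared : ∀ Q ∈ tiles, ∀ a b : ZMod n, IsEdge n Q a b → b ≠ a + 1 →
    ∃! Q', Q' ∈ tiles ∧ Q' ≠ Q ∧ IsEdge n Q' b a
  inter_small : ∀ Q ∈ tiles, ∀ Q' ∈ tiles, Q ≠ Q' → (Q ∩ Q').card ≤ 2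
  noncross : ∀ Q ∈ tiles, ∀ Q' ∈ tiles, ∀ a b c d : ZMod n,
    IsEdge n Q a b → IsEdge n Q' c d → ¬ Crosses n a b c d

/-- The set of diagonals of a tiling, as unordered pairs of vertices. -/
def diagonalsSet (n : ℕ) (T : PolygonTiling n) : Set (Finset (ZMod n)) :=
  {e | ∃ Q ∈ T.tiles, ∃ a b : ZMod n, IsEdge n Q a b ∧ b ≠ a + 1 ∧ e = {a, b}}

/-- One step of Scott's strand construction.  A state `(Q, a)` means the strand is
entering tile `Q` through its directed edge `(a, cnext Q a)`.  Inside `Q` the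
strand uses the segment parallel to the edge `[cprev Q a, a]`, oriented from `a`
towards `p := cprev Q a`, leaving `Q` through the edge `(pp, p)` where
`pp := cprev Q p`.  If that edge is a boundary edge the strand terminates at the
vertex `p`; otherwise it continues into the unique other tile having this edge. -/
noncomputable def scottStep (n : ℕ) (T : PolygonTiling n) :
    Finset (ZMod n) × ZMod n → (Finset (ZMod n) × ZMod n) ⊕ ZMod n := fun s =>
  let Q := s.1
  let a := s.2
  let p := cprev n Q a
  let pp := cprev n Q p
  if p = pp + 1 then Sum.inr p
  else if h : ∃ Q', Q' ∈ T.tiles ∧ Q' ≠ Q ∧ IsEdge n Q' p pp then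
    Sum.inl (Classical.choose h, p)
  else Sum.inr p

/-- The tile in which the strand starting at vertex `x` begins: the unique tile
containing the boundary edge `(x, x+1)`. -/
noncomputable def startTile (n : ℕ) (T : PolygonTiling n) (x : ZMod n) :
    Finset (ZMod n) :=
  Classical.choose (T.boundary_edge x)

/-- The sequence of states of the strand starting at vertex `x`
(`none` after the strand has terminated). -/
noncomputable def strandSeq (n : ℕ) (T : PolygonTiling n) (x : ZMod n) :
    ℕ → Option (Finset (ZMod n) × ZMod n)
  | 0 => some (startTile n T x, x)
  | k + 1 =>
    match strandSeq n T x k with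
    | none => none
    | some s =>
      match scottStep n T s with
      | Sum.inl s' => some s'
      | Sum.inr _ => none

/-- The strand starting at `x` uses a strand segment of tile `Q`, entering `Q`
in state `s = (Q, a)`. -/
def StrandVisits (n : ℕ) (T : PolygonTiling n) (x : ZMod n)
    (s : Finset (ZMod n) × ZMod n) : Prop :=
  ∃ k : ℕ, strandSeq n T x k = some s

/-- Follow a strand for at most `fuel` steps, returning its final vertex. -/
noncomputable def scottRun (n : ℕ) (T : PolygonTiling n) :
    ℕ → Finset (ZMod n) × ZMod n → ZMod n
  | 0, s => s.2
  | k + 1, s =>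
    match scottStep n T s with
    | Sum.inr y => y
    | Sum.inl s' => scottRun n T k s'

/-- The Scott map of the tiling `T`: the strand starting at vertex `x` ends at
vertex `scott n T x`.  (A strand uses at most one segment per tile, so
`T.tiles.card` steps always suffice.) -/
noncomputable def scott (n : ℕ) (T : PolygonTiling n) (x : ZMod n) : ZMod n :=
  scottRun n T T.tiles.card (startTile n T x, x)

/-- A triangulation: all tiles are triangles. -/
def IsTriangulation (n : ℕ) (T : PolygonTiling n) : Prop :=
  ∀ Q ∈ T.tiles, Q.card = 3

/-- An ear of a tiling: a tile exactly one of whose edges is a diagonal. -/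
noncomputable def IsEar (n : ℕ) (T : PolygonTiling n) (Q : Finset (ZMod n)) : Prop :=
  Q ∈ T.tiles ∧ ∃! p : ZMod n × ZMod n, IsEdge n Q p.1 p.2 ∧ p.2 ≠ p.1 + 1

/-- A vertex is simple if it is not an endpoint of any diagonal. -/
def IsSimpleVertex (n : ℕ) (T : PolygonTiling n) (v : ZMod n) : Prop :=
  ∀ e ∈ diagonalsSet n T, v ∉ e

/-- The open dual graph of a tiling: one vertex per tile, two tiles adjacent iff
they share a diagonal. -/
noncomputable def dualGraph (n : ℕ) (T : PolygonTiling n) :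
    SimpleGraph {Q // Q ∈ T.tiles} where
  Adj Q Q' := Q ≠ Q' ∧ ∃ a b : ZMod n, b ≠ a + 1 ∧
    ((IsEdge n Q.1 a b ∧ IsEdge n Q'.1 b a) ∨ (IsEdge n Q.1 b a ∧ IsEdge n Q'.1 a b))
  symm := by
    constructor
    rintro Q Q' ⟨hne, a, b, hb, h⟩
    refine ⟨hne.symm, a, b, hb, ?_⟩
    rcases h with ⟨h1, h2⟩ | ⟨h1, h2⟩
    · exact Or.inr ⟨h2, h1⟩
    · exact Or.inl ⟨h2, h1⟩
  loopless := by constructor; rintro Q ⟨hne, -⟩; exact hne rfl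

/-- `T'` is obtained from `T` by a single flip: a quadrilateral `a,b,c,d`
(clockwise) tiled by the triangles `{a,b,c}, {a,c,d}` (diagonal `[a,c]`) is
retiled by the triangles `{a,b,d}, {b,c,d}` (diagonal `[b,d]`). -/
def FlipStep (n : ℕ) (T T' : PolygonTiling n) : Prop :=
  ∃ a b c d : ZMod n, Between n a b c ∧ Between n c d a ∧
    ({a, b, c} : Finset (ZMod n)) ∈ T.tiles ∧ ({a, c, d} : Finset (ZMod n)) ∈ T.tiles ∧
    T'.tiles = (T.tiles \ {({a, b, c} : Finset (ZMod n)), {a, c, d}}) ∪ {{a, b, d}, {b, c, d}}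

/-- Flip equivalence: the equivalence relation generated by flips. -/
def FlipEquiv (n : ℕ) (T T' : PolygonTiling n) : Prop :=
  Relation.EqvGen (FlipStep n) T T'

/-- The midpoint of the (clockwise) tile edge starting at vertex `a`, recorded as
a vertex of the refined `2n`-gon (vertex `v` of the polygon becomes `2v`). -/
def midpt (n : ℕ) (a : ZMod n) : ZMod (2 * n) := ((2 * a.val + 1 : ℕ) : ZMod (2 * n))

/-- The first vertex of the edge through which the strand segment entering tile `Q`
in state `(Q,a)` leaves `Q`. -/
noncomputable def segTarget (n : ℕ) (Q : Finset (ZMod n)) (a : ZMod n) : ZMod n :=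
  cprev n Q (cprev n Q a)

/-- The strand segments of tile `Q` entering in states `(Q,a)` and `(Q,c)` cross
inside `Q` (their chords, joining midpoints of edges of `Q`, interleave). -/
noncomputable def SegCross (n : ℕ) (Q : Finset (ZMod n)) (a c : ZMod n) : Prop :=
  Crosses (2 * n) (midpt n a) (midpt n (segTarget n Q a))
    (midpt n c) (midpt n (segTarget n Q c))

/-- The set of tiles inside which the strands starting at `x` and at `y` cross. -/
noncomputable def crossingTiles (n : ℕ) (T : PolygonTiling n) (x y : ZMod n) :
    Set (Finset (ZMod n)) :=
  {Q | Q ∈ T.tiles ∧ ∃ a c : ZMod n,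
    StrandVisits n T x (Q, a) ∧ StrandVisits n T y (Q, c) ∧ SegCross n Q a c}

/-- `v` lies on the closed clockwise arc from `i` to `j`. -/
def InArc (n : ℕ) (i j v : ZMod n) : Prop := (v - i).val ≤ (j - i).val


/-! ### Auxiliary lemmas for stmt11 -/

section Aux

variable {n : ℕ} [NeZero n]
set_option linter.unusedSectionVars false

private lemma zval_add_cases (u v : ZMod n) :
    (u + v).val = u.val + v.val ∨ (u + v).val + n = u.val + v.val := by
  have h := ZMod.val_add u v
  have hu := ZMod.val_lt u
  have hv := ZMod.val_lt v
  rcases Nat.lt_or_ge (u.val + v.val) n with hlt | hge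
  · left; rw [h, Nat.mod_eq_of_lt hlt]
  · right; rw [h, Nat.mod_eq_sub_mod hge, Nat.mod_eq_of_lt (by omega)]; omega

private lemma zval_sub_cases (u v : ZMod n) :
    (u - v).val + v.val = u.val ∨ (u - v).val + v.val = u.val + n := by
  have h := zval_add_cases (u - v) v
  rw [sub_add_cancel] at h
  omega

private lemma zval_sub_of_le {u v : ZMod n} (h : v.val ≤ u.val) :
    (u - v).val = u.val - v.val := by
  have h1 := zval_sub_cases u v
  have h2 := ZMod.val_lt (u - v)
  have h3 := ZMod.val_lt u
  omega

private lemma zval_eq_of (u v : ZMod n) (h : u.val = v.val) : u = v := by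
  have h1 : (u - v).val = 0 := by
    have := zval_sub_of_le (le_of_eq h.symm)
    omega
  have h2 : u - v = 0 := (ZMod.val_eq_zero _).1 h1
  have := sub_eq_zero.mp h2
  exact this

private lemma zval_pos_of_ne {u v : ZMod n} (h : u ≠ v) : 0 < (u - v).val := by
  rcases Nat.eq_zero_or_pos ((u - v).val) with h0 | h0
  · exfalso; exact h (sub_eq_zero.mp ((ZMod.val_eq_zero _).1 h0))
  · exact h0

private lemma zval_neg {u : ZMod n} (h : u ≠ 0) : (-u).val = n - u.val := by
  have h1 := zval_sub_cases 0 u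
  have h2 : ((0 : ZMod n)).val = 0 := ZMod.val_zero
  have h3 : 0 < u.val := by
    have := zval_pos_of_ne (v := 0) h
    simpa using this
  have h4 := ZMod.val_lt (-u)
  have : (0 - u : ZMod n) = -u := by ring
  rw [this, h2] at h1
  omega

private lemma zval_sub_inj {w c c' : ZMod n} (h : (c - w).val = (c' - w).val) : c = c' := by
  have := zval_eq_of _ _ h
  have := sub_left_inj.mp this
  exact this

/-- `cnext` basic spec, given another element of `Q`. -/
private lemma cnext_spec {Q : Finset (ZMod n)} {a : ZMod n} (ha : a ∈ Q)
    {c : ZMod n} (hc : c ∈ Q) (hca : c ≠ a) :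
    cnext n Q a ∈ Q ∧ cnext n Q a ≠ a ∧
      ∀ d ∈ Q, d ≠ a → (cnext n Q a - a).val ≤ (d - a).val := by
  have key : ∀ d ∈ Q, d ≠ a → 0 < (d - a).val ∧ (d - a).val ≤ n ∧
      a + (((d - a).val : ℕ) : ZMod n) ∈ Q := by
    intro d hd hda
    refine ⟨zval_pos_of_ne hda, le_of_lt (ZMod.val_lt _), ?_⟩
    have : (((d - a).val : ℕ) : ZMod n) = d - a := by
      apply zval_eq_of
      rw [ZMod.val_natCast, Nat.mod_eq_of_lt (ZMod.val_lt _)]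
    rw [this]; simpa using hd
  have hex : ∃ k : ℕ, 0 < k ∧ k ≤ n ∧ a + (k : ZMod n) ∈ Q :=
    ⟨(c - a).val, key c hc hca⟩
  have hdef : cnext n Q a = a + ((Nat.find hex : ℕ) : ZMod n) := by
    rw [cnext, dif_pos hex]
  obtain ⟨hk0, hkn, hkQ⟩ := Nat.find_spec hex
  have hklt : Nat.find hex < n := by
    have := Nat.find_min' hex (key c hc hca)
    have := ZMod.val_lt (c - a)
    omega
  have hval : (cnext n Q a - a).val = Nat.find hex := by
    rw [hdef, add_sub_cancel_left, ZMod.val_natCast, Nat.mod_eq_of_lt hklt]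
  refine ⟨by rw [hdef]; exact hkQ, ?_, ?_⟩
  · intro h
    rw [h] at hval
    simp at hval
    omega
  · intro d hd hda
    have := Nat.find_min' hex (key d hd hda)
    omega

/-- `cprev` basic spec, given another element of `Q`. -/
private lemma cprev_spec {Q : Finset (ZMod n)} {a : ZMod n} (ha : a ∈ Q)
    {c : ZMod n} (hc : c ∈ Q) (hca : c ≠ a) :
    cprev n Q a ∈ Q ∧ cprev n Q a ≠ a ∧
      ∀ d ∈ Q, d ≠ a → (a - cprev n Q a).val ≤ (a - d).val := by
  have key : ∀ d ∈ Q, d ≠ a → 0 < (a - d).val ∧ (a - d).val ≤ n ∧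
      a - (((a - d).val : ℕ) : ZMod n) ∈ Q := by
    intro d hd hda
    refine ⟨zval_pos_of_ne (Ne.symm hda), le_of_lt (ZMod.val_lt _), ?_⟩
    have : (((a - d).val : ℕ) : ZMod n) = a - d := by
      apply zval_eq_of
      rw [ZMod.val_natCast, Nat.mod_eq_of_lt (ZMod.val_lt _)]
    rw [this]; simpa using hd
  have hex : ∃ k : ℕ, 0 < k ∧ k ≤ n ∧ a - (k : ZMod n) ∈ Q :=
    ⟨(a - c).val, key c hc hca⟩
  have hdef : cprev n Q a = a - ((Nat.find hex : ℕ) : ZMod n) := by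
    rw [cprev, dif_pos hex]
  obtain ⟨hk0, hkn, hkQ⟩ := Nat.find_spec hex
  have hklt : Nat.find hex < n := by
    have := Nat.find_min' hex (key c hc hca)
    have := ZMod.val_lt (a - c)
    omega
  have hval : (a - cprev n Q a).val = Nat.find hex := by
    rw [hdef, sub_sub_cancel, ZMod.val_natCast, Nat.mod_eq_of_lt hklt]
  refine ⟨by rw [hdef]; exact hkQ, ?_, ?_⟩
  · intro h
    rw [h] at hval
    simp at hval
    omega
  · intro d hd hda
    have := Nat.find_min' hex (key d hd hda)
    omega

private lemma cnext_eq_of {Q : Finset (ZMod n)} {a b : ZMod n} (ha : a ∈ Q) (hb : b ∈ Q)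
    (hba : b ≠ a) (hmin : ∀ c ∈ Q, c ≠ a → (b - a).val ≤ (c - a).val) :
    cnext n Q a = b := by
  obtain ⟨h1, h2, h3⟩ := cnext_spec ha hb hba
  have e1 := h3 b hb hba
  have e2 := hmin _ h1 h2
  exact zval_sub_inj (le_antisymm e1 e2)

private lemma cprev_eq_of {Q : Finset (ZMod n)} {a b : ZMod n} (ha : a ∈ Q) (hb : b ∈ Q)
    (hba : b ≠ a) (hmin : ∀ c ∈ Q, c ≠ a → (a - b).val ≤ (a - c).val) :
    cprev n Q a = b := by
  obtain ⟨h1, h2, h3⟩ := cprev_spec ha hb hba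
  have e1 := h3 b hb hba
  have e2 := hmin _ h1 h2
  have h4 : (a - cprev n Q a) = (a - b) := zval_eq_of _ _ (le_antisymm e1 e2)
  exact sub_right_injective h4

private lemma cprev_eq_cnext {Q : Finset (ZMod n)} {a b : ZMod n} (ha : a ∈ Q) (hb : b ∈ Q)
    (hab : b ≠ a) (h : cnext n Q a = b) : cprev n Q b = a := by
  obtain ⟨_, _, hmin⟩ := cnext_spec ha hb hab
  rw [h] at hmin
  apply cprev_eq_of hb ha hab.symm
  intro c hc hcb
  by_cases hca : c = a
  · rw [hca]
  · by_contra hlt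
    push_neg at hlt
    have hc1 : c - a = (b - a) - (b - c) := by ring
    have hc2 : (c - a).val = (b - a).val - (b - c).val := by
      rw [hc1, zval_sub_of_le (le_of_lt hlt)]
    have h3 := hmin c hc hca
    have h4 : 0 < (b - c).val := zval_pos_of_ne (Ne.symm hcb)
    omega

private lemma cnext_eq_cprev {Q : Finset (ZMod n)} {a b : ZMod n} (ha : a ∈ Q) (hb : b ∈ Q)
    (hab : b ≠ a) (h : cprev n Q a = b) : cnext n Q b = a := by
  obtain ⟨_, _, hmin⟩ := cprev_spec ha hb hab
  rw [h] at hmin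
  apply cnext_eq_of hb ha hab.symm
  intro c hc hcb
  by_cases hca : c = a
  · rw [hca]
  · by_contra hlt
    push_neg at hlt
    have hc1 : a - c = (a - b) - (c - b) := by ring
    have hc2 : (a - c).val = (a - b).val - (c - b).val := by
      rw [hc1, zval_sub_of_le (le_of_lt hlt)]
    have h3 := hmin c hc hca
    have h4 : 0 < (c - b).val := zval_pos_of_ne hcb
    omega

private lemma arc_of_cnext {Q : Finset (ZMod n)} {a c : ZMod n} (ha : a ∈ Q) (hc : c ∈ Q)
    (hcard : 2 ≤ Q.card) : (c - cnext n Q a).val ≤ (a - cnext n Q a).val := by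
  obtain ⟨w, hw, hwa⟩ := Finset.exists_mem_ne (s := Q) (by omega) a
  obtain ⟨hbQ, hba, hmin⟩ := cnext_spec ha hw hwa
  set b := cnext n Q a with hbdef
  by_cases hca : c = a
  · rw [hca]
  · by_cases hcb : c = b
    · rw [hcb, sub_self]
      simp
    · have h1 := hmin c hc hca
      have hab : (a - b).val = n - (b - a).val := by
        have e : a - b = -(b - a) := by ring
        rw [e, zval_neg (sub_ne_zero.mpr hba)]
      have hcb' : c - b = (c - a) - (b - a) := by ring
      rw [hcb', zval_sub_of_le h1, hab]
      have := ZMod.val_lt (c - a)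
      omega

private lemma card_le_of_val_le {S : Finset (ZMod n)} {w : ZMod n} {B : ℕ}
    (h : ∀ c ∈ S, (c - w).val ≤ B) : S.card ≤ B + 1 := by
  have hinj : Set.InjOn (fun c => (c - w).val) S := fun c _ c' _ he => zval_sub_inj he
  have hmaps : ∀ c ∈ S, (fun c => (c - w).val) c ∈ Finset.range (B + 1) := by
    intro c hc
    show (c - w).val ∈ Finset.range (B + 1)
    exact Finset.mem_range.mpr (by have := h c hc; omega)
  have := Finset.card_le_card_of_injOn _ hmaps hinj
  simpa using this

private lemma step_facts (hn : 3 ≤ n) {Q : Finset (ZMod n)} {a : ZMod n}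
    (hcard : 3 ≤ Q.card) (ha : a ∈ Q) :
    cnext n Q a ∈ Q ∧ cnext n Q a ≠ a ∧
    cprev n Q a ∈ Q ∧ cprev n Q a ≠ a ∧
    cprev n Q (cprev n Q a) ∈ Q ∧ cprev n Q (cprev n Q a) ≠ cprev n Q a ∧
    cprev n Q (cprev n Q a) ≠ a ∧ cnext n Q a ≠ cprev n Q a ∧
    cnext n Q (cprev n Q (cprev n Q a)) = cprev n Q a ∧
    (∀ c ∈ Q, (c - cnext n Q a).val ≤ (a - cnext n Q a).val) ∧
    (cprev n Q a - cnext n Q a).val < (a - cnext n Q a).val ∧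
    (cprev n Q (cprev n Q a) - cnext n Q a).val < (cprev n Q a - cnext n Q a).val ∧
    Q.card - 3 ≤ (cprev n Q (cprev n Q a) - cnext n Q a).val ∧
    (Q.card = 3 → cprev n Q (cprev n Q a) = cnext n Q a) ∧
    (cprev n Q a = cprev n Q (cprev n Q a) + 1 →
      (cprev n Q a - cnext n Q a).val = (cprev n Q (cprev n Q a) - cnext n Q a).val + 1) := by
  obtain ⟨w, hw, hwa⟩ := Finset.exists_mem_ne (s := Q) (by omega) a
  obtain ⟨hbQ, hba, hminb⟩ := cnext_spec ha hw hwa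
  obtain ⟨hpQ, hpa, hminp⟩ := cprev_spec ha hw hwa
  set b := cnext n Q a with hbdef
  set p := cprev n Q a with hpdef
  have harc : ∀ c ∈ Q, (c - b).val ≤ (a - b).val := fun c hc => arc_of_cnext ha hc (by omega)
  have htrans : ∀ c ∈ Q, c ≠ a → (a - c).val = (a - b).val - (c - b).val := by
    intro c hc hca
    have e : a - c = (a - b) - (c - b) := by ring
    rw [e, zval_sub_of_le (harc c hc)]
  have hmaxp : ∀ c ∈ Q, c ≠ a → (c - b).val ≤ (p - b).val := by
    intro c hc hca
    have h1 := hminp c hc hca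
    rw [htrans c hc hca, htrans p hpQ hpa] at h1
    have := harc c hc
    have := harc p hpQ
    have : 0 < (a - p).val := zval_pos_of_ne (Ne.symm hpa)
    have h2 := htrans p hpQ hpa
    omega
  have hrpa : (p - b).val < (a - b).val := by
    have h1 := harc p hpQ
    rcases Nat.lt_or_ge ((p - b).val) ((a - b).val) with h | h
    · exact h
    · exact absurd (zval_sub_inj (le_antisymm h1 h)) hpa
  -- a third point distinct from a, p
  have hthird : ∃ c ∈ Q, c ≠ a ∧ c ≠ p := by
    have hsub : ({a, p} : Finset (ZMod n)) ⊆ Q := by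
      intro z hz; simp at hz; rcases hz with h | h <;> (rw [h]; assumption)
    have h2 : (Q \ {a, p}).card ≥ 1 := by
      rw [Finset.card_sdiff_of_subset hsub]
      have : ({a, p} : Finset (ZMod n)).card ≤ 2 := Finset.card_insert_le _ _ |>.trans (by simp)
      omega
    obtain ⟨c, hc⟩ := Finset.card_pos.mp (show 0 < (Q \ ({a, p} : Finset (ZMod n))).card by omega)
    simp only [Finset.mem_sdiff, Finset.mem_insert, Finset.mem_singleton] at hc
    exact ⟨c, hc.1, fun h => hc.2 (Or.inl h), fun h => hc.2 (Or.inr h)⟩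
  have hbp : b ≠ p := by
    intro h
    obtain ⟨c, hc, hca, hcp⟩ := hthird
    have h1 := hmaxp c hc hca
    rw [← h] at h1
    simp only [sub_self, ZMod.val_zero] at h1
    have : (c - b).val = 0 := by omega
    have : c = b := by
      have hb0 : (b - b).val = 0 := by simp
      exact zval_sub_inj (w := b) (by omega)
    exact hcp (this.trans h)
  obtain ⟨hppQ, hppp, hminpp⟩ := cprev_spec hpQ hbQ hbp
  set pp := cprev n Q p with hppdef
  have hrb0 : (b - b).val = 0 := by simp
  have hpbval : (p - b).val = (p - b).val := rfl
  have hppa : pp ≠ a := by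
    intro h
    have h1 := hminpp b hbQ hbp
    rw [h] at h1
    have h2 : (p - a).val = n - (a - p).val := by
      have e : p - a = -(a - p) := by ring
      rw [e, zval_neg (sub_ne_zero.mpr (Ne.symm hpa))]
    have h3 := htrans p hpQ hpa
    have h4 := harc p hpQ
    have h5 := ZMod.val_lt (a - b)
    have h6 : 0 < (a - p).val := zval_pos_of_ne (Ne.symm hpa)
    omega
  have hrppp : (pp - b).val ≤ (p - b).val := hmaxp pp hppQ hppa
  have hptrans : ∀ c ∈ Q, c ≠ a → (p - c).val = (p - b).val - (c - b).val ∨ c = p := by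
    intro c hc hca
    by_cases hcp : c = p
    · right; exact hcp
    · left
      have e : p - c = (p - b) - (c - b) := by ring
      rw [e, zval_sub_of_le (hmaxp c hc hca)]
  have hmaxpp : ∀ c ∈ Q, c ≠ a → c ≠ p → (c - b).val ≤ (pp - b).val := by
    intro c hc hca hcp
    have h1 := hminpp c hc hcp
    rcases hptrans c hc hca with h2 | h2
    · rcases hptrans pp hppQ hppa with h3 | h3
      · rw [h2, h3] at h1
        have := hmaxp c hc hca
        omega
      · exact absurd h3 hppp
    · exact absurd h2 hcp
  have hrpppstrict : (pp - b).val < (p - b).val := by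
    rcases Nat.lt_or_ge ((pp - b).val) ((p - b).val) with h | h
    · exact h
    · exact absurd (zval_sub_inj (le_antisymm hrppp h)) hppp
  have hcardbd : Q.card - 3 ≤ (pp - b).val := by
    have hsub : ({a, p} : Finset (ZMod n)) ⊆ Q := by
      intro z hz; simp at hz; rcases hz with h | h <;> (rw [h]; assumption)
    have h1 : ∀ c ∈ Q \ {a, p}, (c - b).val ≤ (pp - b).val := by
      intro c hc
      simp only [Finset.mem_sdiff, Finset.mem_insert, Finset.mem_singleton] at hc
      exact hmaxpp c hc.1 (fun h => hc.2 (Or.inl h)) (fun h => hc.2 (Or.inr h))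
    have h2 := card_le_of_val_le h1
    have h3 : (Q \ ({a, p} : Finset (ZMod n))).card = Q.card - 2 := by
      rw [Finset.card_sdiff_of_subset hsub, Finset.card_pair (Ne.symm hpa)]
    omega
  have htri : Q.card = 3 → pp = b := by
    intro h3
    have hsub : ({a, p} : Finset (ZMod n)) ⊆ Q := by
      intro z hz; simp at hz; rcases hz with h | h <;> (rw [h]; assumption)
    have hcd : (Q \ ({a, p} : Finset (ZMod n))).card = 1 := by
      rw [Finset.card_sdiff_of_subset hsub, Finset.card_pair (Ne.symm hpa), h3]
    have hppmem : pp ∈ Q \ ({a, p} : Finset (ZMod n)) := by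
      simp only [Finset.mem_sdiff, Finset.mem_insert, Finset.mem_singleton]
      exact ⟨hppQ, fun h => (by tauto : ¬ (pp = a ∨ pp = p)) h⟩
    have hbmem : b ∈ Q \ ({a, p} : Finset (ZMod n)) := by
      simp only [Finset.mem_sdiff, Finset.mem_insert, Finset.mem_singleton]
      exact ⟨hbQ, fun h => (by tauto : ¬ (b = a ∨ b = p)) h⟩
    exact Finset.card_le_one.mp (le_of_eq hcd) _ hppmem _ hbmem
  have hcnpp : cnext n Q pp = p := cnext_eq_cprev hpQ hppQ hppp hppdef.symm
  have hstepval : p = pp + 1 → (p - b).val = (pp - b).val + 1 := by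
    intro h
    have h1 : (p - pp).val = 1 := by
      rw [h, add_sub_cancel_left]
      have : ((1 : ℕ) : ZMod n) = (1 : ZMod n) := by norm_num
      rw [← this, ZMod.val_cast_of_lt (by omega)]
    have e : p - pp = (p - b) - (pp - b) := by ring
    rw [e, zval_sub_of_le hrppp] at h1
    omega
  exact ⟨hbQ, hba, hpQ, hpa, hppQ, hppp, hppa, hbp, hcnpp, harc, hrpa, hrpppstrict,
    hcardbd, htri, hstepval⟩

private def pv {n : ℕ} (x v : ZMod n) : ℕ := (v - x).val

private def pv' {n : ℕ} (x v : ZMod n) : ℕ := if v = x then n else pv x v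

private lemma pv_lt (x v : ZMod n) : pv x v < n := ZMod.val_lt _

private lemma pv'_le (x v : ZMod n) : pv' x v ≤ n := by
  unfold pv'
  split
  · exact le_refl n
  · exact le_of_lt (pv_lt x v)

private lemma pv'_eq {x v : ZMod n} (h : v ≠ x) : pv' x v = pv x v := if_neg h

private lemma pv_self (x : ZMod n) : pv x x = 0 := by simp [pv]

private lemma zval_one (hn : 3 ≤ n) : (1 : ZMod n).val = 1 := by
  have h : ((1:ℕ) : ZMod n) = 1 := Nat.cast_one
  rw [← h, ZMod.val_cast_of_lt (by omega)]

private lemma zval_two (hn : 3 ≤ n) : (2 : ZMod n).val = 2 := by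
  have h : ((2:ℕ) : ZMod n) = 2 := by norm_num
  rw [← h, ZMod.val_cast_of_lt (by omega)]

private lemma scottStep_eq (T : PolygonTiling n) (Q : Finset (ZMod n)) (a : ZMod n) :
    scottStep n T (Q, a) =
      if cprev n Q a = cprev n Q (cprev n Q a) + 1 then Sum.inr (cprev n Q a)
      else if h : ∃ Q', Q' ∈ T.tiles ∧ Q' ≠ Q ∧
          IsEdge n Q' (cprev n Q a) (cprev n Q (cprev n Q a)) then
        Sum.inl (Classical.choose h, cprev n Q a)
      else Sum.inr (cprev n Q a) := rfl

private lemma scottRun_succ_inr {T : PolygonTiling n} {s : Finset (ZMod n) × ZMod n}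
    {y : ZMod n} {f : ℕ} (h : scottStep n T s = Sum.inr y) :
    scottRun n T (f + 1) s = y := by
  simp [scottRun, h]

private lemma scottRun_succ_inl {T : PolygonTiling n} {s s' : Finset (ZMod n) × ZMod n}
    {f : ℕ} (h : scottStep n T s = Sum.inl s') :
    scottRun n T (f + 1) s = scottRun n T f s' := by
  simp [scottRun, h]

private lemma step_cases (hn : 3 ≤ n) (T : PolygonTiling n) (x : ZMod n)
    {Q : Finset (ZMod n)} {a : ZMod n} (hQ : Q ∈ T.tiles) (ha : a ∈ Q)
    (hb1 : 1 ≤ pv x (cnext n Q a))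
    (hH : pv x (cnext n Q a) + (a - cnext n Q a).val = pv' x a) :
    (∀ c ∈ Q, pv' x c ≤ pv' x a) ∧
    ((∃ y, scottStep n T (Q, a) = Sum.inr y ∧ y ≠ x ∧
        pv x (cnext n Q a) + (Q.card - 2) ≤ pv x y ∧ pv' x y < pv' x a ∧
        (Q.card = 3 → pv x y = pv x (cnext n Q a) + 1)) ∨
      (∃ Q' a', scottStep n T (Q, a) = Sum.inl (Q', a') ∧ Q' ∈ T.tiles ∧ a' ∈ Q' ∧ a' ≠ x ∧
        pv x (cnext n Q a) + (Q.card - 3) ≤ pv x (cnext n Q' a') ∧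
        1 ≤ pv x (cnext n Q' a') ∧
        pv x (cnext n Q' a') + (a' - cnext n Q' a').val = pv' x a' ∧
        pv' x a' < pv' x a ∧
        (Q.card = 3 → pv x (cnext n Q' a') = pv x (cnext n Q a)))) := by
  have hcard := T.three_le Q hQ
  obtain ⟨hbQ, hba, hpQ, hpa, hppQ, hppp, hppa, hbp, hcnpp, harc, hrpa, hrppps,
    hcardbd, htri, hstepval⟩ := step_facts hn hcard ha
  set b := cnext n Q a with hbdef
  set p := cprev n Q a with hpdef
  set pp := cprev n Q p with hppdef
  have hπ : ∀ c ∈ Q, c ≠ a → pv x c = pv x b + (c - b).val ∧ pv x c < pv' x a := by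
    intro c hc hca
    have hrc : (c - b).val < (a - b).val := by
      have h1 := harc c hc
      rcases Nat.lt_or_ge ((c - b).val) ((a - b).val) with h | h
      · exact h
      · exact absurd (zval_sub_inj (le_antisymm h1 h)) hca
    have hsum : pv x b + (c - b).val < pv' x a := by omega
    have hle : pv' x a ≤ n := pv'_le x a
    have e : c - x = (b - x) + (c - b) := by ring
    have := zval_add_cases (b - x) (c - b)
    have hval : (c - x).val = (b - x).val + (c - b).val := by
      rcases this with h | h
      · rw [e]; exact h
      · exfalso
        have h2 := ZMod.val_lt (c - x)
        rw [← e] at h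
        have : (c - x).val + n = pv x b + (c - b).val := h
        omega
    exact ⟨hval, by rw [show pv x c = (c - x).val from rfl, hval]; exact hsum⟩
  have hcont : ∀ c ∈ Q, pv' x c ≤ pv' x a := by
    intro c hc
    by_cases hca : c = a
    · rw [hca]
    · obtain ⟨h1, h2⟩ := hπ c hc hca
      have hcx : c ≠ x := by
        intro h
        rw [h, pv_self] at h1
        omega
      rw [pv'_eq hcx]
      omega
  refine ⟨hcont, ?_⟩
  by_cases hterm : p = pp + 1
  · left
    refine ⟨p, ?_, ?_, ?_, ?_, ?_⟩
    · rw [scottStep_eq, ← hpdef, ← hppdef, if_pos hterm]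
    · intro h
      obtain ⟨h1, _⟩ := hπ p hpQ hpa
      rw [h, pv_self] at h1
      omega
    · obtain ⟨h1, _⟩ := hπ p hpQ hpa
      have h2 := hstepval hterm
      rw [h1, h2]
      omega
    · obtain ⟨h1, h2⟩ := hπ p hpQ hpa
      have hpx : p ≠ x := by
        intro h
        rw [h, pv_self] at h1
        omega
      rw [pv'_eq hpx]
      exact h2
    · intro h3
      obtain ⟨h1, _⟩ := hπ p hpQ hpa
      have h2 := hstepval hterm
      have h4 := htri h3
      rw [h1, h2, h4]
      simp
  · right
    have hedge : IsEdge n Q pp p := ⟨hppQ, hpQ, hppp, hcnpp.symm⟩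
    obtain ⟨Q', ⟨hQ'm, hQ'ne, hE'⟩, huniq⟩ := T.diag_shared Q hQ pp p hedge hterm
    have hex : ∃ Q', Q' ∈ T.tiles ∧ Q' ≠ Q ∧ IsEdge n Q' p pp := ⟨Q', hQ'm, hQ'ne, hE'⟩
    have hstep : scottStep n T (Q, a) = Sum.inl (Classical.choose hex, p) := by
      rw [scottStep_eq, ← hpdef, ← hppdef, if_neg hterm, dif_pos hex]
    obtain ⟨hCm, hCne, hCE⟩ := Classical.choose_spec hex
    set C := Classical.choose hex with hCdef
    obtain ⟨hpC, hppC, hpppC, hcnC⟩ := hCE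
    refine ⟨C, p, hstep, hCm, hpC, ?_, ?_, ?_, ?_, ?_, ?_⟩
    · intro h
      obtain ⟨h1, _⟩ := hπ p hpQ hpa
      rw [h, pv_self] at h1
      omega
    · rw [← hcnC]
      obtain ⟨h1, _⟩ := hπ pp hppQ hppa
      rw [h1]
      omega
    · rw [← hcnC]
      obtain ⟨h1, _⟩ := hπ pp hppQ hppa
      omega
    · rw [← hcnC]
      obtain ⟨h1, _⟩ := hπ pp hppQ hppa
      obtain ⟨h2, _⟩ := hπ p hpQ hpa
      have hpx : p ≠ x := by
        intro h
        rw [h, pv_self] at h2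
        omega
      rw [pv'_eq hpx]
      have he : p - pp = (p - b) - (pp - b) := by ring
      have h3 : (p - pp).val = (p - b).val - (pp - b).val := by
        rw [he, zval_sub_of_le (le_of_lt hrppps)]
      rw [h1, h3, h2]
      omega
    · obtain ⟨h2, h4⟩ := hπ p hpQ hpa
      have hpx : p ≠ x := by
        intro h
        rw [h, pv_self] at h2
        omega
      rw [pv'_eq hpx]
      exact h4
    · intro h3
      rw [← hcnC, htri h3]

private lemma runl (hn : 3 ≤ n) (T : PolygonTiling n) (x : ZMod n) :
    ∀ m fuel (V : Finset (Finset (ZMod n))) (Q : Finset (ZMod n)) (a : ZMod n),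
    pv' x a = m →
    V ⊆ T.tiles → T.tiles.card ≤ fuel + V.card → Q ∈ T.tiles → a ∈ Q →
    1 ≤ pv x (cnext n Q a) →
    pv x (cnext n Q a) + (a - cnext n Q a).val = pv' x a →
    (∀ R ∈ V, ∃ c ∈ R, pv' x a < pv' x c) →
    pv x (cnext n Q a) + (Q.card - 2) ≤ pv x (scottRun n T fuel (Q, a)) ∧
    (IsTriangulation n T → pv x (scottRun n T fuel (Q, a)) = pv x (cnext n Q a) + 1) := by
  intro m
  induction m using Nat.strong_induction_on with
  | _ m IH =>
  intro fuel V Q a hm hVsub hfuel hQ ha hb1 hH hV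
  obtain ⟨hcont, hsplit⟩ := step_cases hn T x hQ ha hb1 hH
  have hQnotV : Q ∉ V := by
    intro hQV
    obtain ⟨c, hc, hlt⟩ := hV Q hQV
    have := hcont c hc
    omega
  have hfuel1 : 1 ≤ fuel := by
    have h1 : insert Q V ⊆ T.tiles := Finset.insert_subset hQ hVsub
    have h2 := Finset.card_le_card h1
    rw [Finset.card_insert_of_notMem hQnotV] at h2
    omega
  obtain ⟨f, rfl⟩ : ∃ f, fuel = f + 1 := ⟨fuel - 1, by omega⟩
  rcases hsplit with ⟨y, hstep, hyx, hylb, hylt, hytri⟩ |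
    ⟨Q', a', hstep, hQ'm, ha', ha'x, hlb, hb1', hH', hlt', htri'⟩
  · rw [scottRun_succ_inr hstep]
    exact ⟨hylb, fun htr => hytri (htr Q hQ)⟩
  · rw [scottRun_succ_inl hstep]
    have hVc : ∀ R ∈ insert Q V, ∃ c ∈ R, pv' x a' < pv' x c := by
      intro R hR
      rcases Finset.mem_insert.mp hR with rfl | hRV
      · refine ⟨a, ha, ?_⟩
        omega
      · obtain ⟨c, hc, h⟩ := hV R hRV
        exact ⟨c, hc, by omega⟩
    have hrec := IH (pv' x a') (by omega) f (insert Q V) Q' a' rfl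
      (Finset.insert_subset hQ hVsub)
      (by rw [Finset.card_insert_of_notMem hQnotV]; omega)
      hQ'm ha' hb1' hH' hVc
    have hc3 := T.three_le Q' hQ'm
    constructor
    · have := hrec.1
      omega
    · intro htr
      have h1 := hrec.2 htr
      rw [h1, htri' (htr Q hQ)]

private lemma start_step (hn : 3 ≤ n) (T : PolygonTiling n) (x : ZMod n) :
    startTile n T x ∈ T.tiles ∧ x ∈ startTile n T x ∧
    1 ≤ pv x (cnext n (startTile n T x) x) ∧
    pv x (cnext n (startTile n T x) x) = 1 ∧
    pv x (cnext n (startTile n T x) x) + (x - cnext n (startTile n T x) x).val = pv' x x := by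
  have hspec : startTile n T x ∈ T.tiles ∧ IsEdge n (startTile n T x) x (x + 1) :=
    (Classical.choose_spec (T.boundary_edge x)).1
  obtain ⟨hSm, hxS, hx1S, hxne, hcn⟩ := hspec
  set S := startTile n T x with hSdef
  have h1 : pv x (cnext n S x) = 1 := by
    rw [← hcn]
    show (x + 1 - x).val = 1
    rw [add_sub_cancel_left, zval_one hn]
  have h2 : (x - cnext n S x).val = n - 1 := by
    rw [← hcn]
    have e : x - (x + 1) = -(1 : ZMod n) := by ring
    rw [e, zval_neg (by
      intro h
      have := zval_one hn
      rw [h, ZMod.val_zero] at this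
      omega), zval_one hn]
  refine ⟨hSm, hxS, by omega, h1, ?_⟩
  rw [h1, h2]
  have : pv' x x = n := if_pos rfl
  omega

private lemma scott_val (hn : 3 ≤ n) (T : PolygonTiling n) (x : ZMod n) :
    1 + ((startTile n T x).card - 2) ≤ pv x (scott n T x) ∧
    (IsTriangulation n T → pv x (scott n T x) = 2) := by
  obtain ⟨hSm, hxS, hb1, hbv, hH⟩ := start_step hn T x
  set S := startTile n T x with hSdef
  have hScard := T.three_le S hSm
  obtain ⟨hcont, hsplit⟩ := step_cases hn T x hSm hxS hb1 hH
  have hfuel1 : 1 ≤ T.tiles.card := Finset.card_pos.mpr ⟨S, hSm⟩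
  obtain ⟨f, hf⟩ : ∃ f, T.tiles.card = f + 1 := ⟨T.tiles.card - 1, by omega⟩
  show 1 + (S.card - 2) ≤ pv x (scottRun n T T.tiles.card (S, x)) ∧
    (IsTriangulation n T → pv x (scottRun n T T.tiles.card (S, x)) = 2)
  rw [hf]
  rcases hsplit with ⟨y, hstep, hyx, hylb, hylt, hytri⟩ |
    ⟨Q', a', hstep, hQ'm, ha', ha'x, hlb, hb1', hH', hlt', htri'⟩
  · rw [scottRun_succ_inr hstep]
    exact ⟨by omega, fun htr => by have := hytri (htr S hSm); omega⟩
  · rw [scottRun_succ_inl hstep]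
    have hVc : ∀ R ∈ ({S} : Finset (Finset (ZMod n))), ∃ c ∈ R, pv' x a' < pv' x c := by
      intro R hR
      rw [Finset.mem_singleton] at hR
      subst hR
      refine ⟨x, hxS, ?_⟩
      rw [pv'_eq ha'x, show pv' x x = n from if_pos rfl]
      exact pv_lt x a'
    have hrec := runl hn T x (pv' x a') f {S} Q' a' rfl
      (Finset.singleton_subset_iff.mpr hSm) (by rw [Finset.card_singleton]; omega)
      hQ'm ha' hb1' hH' hVc
    have hc3 := T.three_le Q' hQ'm
    constructor
    · have := hrec.1
      omega
    · intro htr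
      have h1 := hrec.2 htr
      rw [h1, htri' (htr S hSm), hbv]

private lemma strandSeq_zero (T : PolygonTiling n) (x : ZMod n) :
    strandSeq n T x 0 = some (startTile n T x, x) := rfl

private lemma strandSeq_succ (T : PolygonTiling n) (x : ZMod n) (k : ℕ) :
    strandSeq n T x (k + 1) =
      match strandSeq n T x k with
      | none => none
      | some s =>
        match scottStep n T s with
        | Sum.inl s' => some s'
        | Sum.inr _ => none := rfl

private lemma strandSeq_succ_of (T : PolygonTiling n) (x : ZMod n) (k : ℕ)
    {s s' : Finset (ZMod n) × ZMod n} (h1 : strandSeq n T x k = some s)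
    (h2 : scottStep n T s = Sum.inl s') : strandSeq n T x (k + 1) = some s' := by
  have h3 : strandSeq n T x (k + 1) =
      match scottStep n T s with
      | Sum.inl s' => some s'
      | Sum.inr _ => none := by
    rw [strandSeq_succ, h1]
  rw [h3, h2]

private lemma strandSeq_succ_inv (T : PolygonTiling n) (x : ZMod n) (k : ℕ)
    {s' : Finset (ZMod n) × ZMod n} (h : strandSeq n T x (k + 1) = some s') :
    ∃ s, strandSeq n T x k = some s ∧ scottStep n T s = Sum.inl s' := by
  rw [strandSeq_succ] at h
  rcases hk : strandSeq n T x k with _ | s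
  · rw [hk] at h; simp at h
  · rw [hk] at h
    have h' : (match scottStep n T s with
      | Sum.inl s'' => some s''
      | Sum.inr _ => none) = some s' := h
    rcases hs : scottStep n T s with s'' | y
    · rw [hs] at h'
      simp at h'
      exact ⟨s, rfl, by rw [hs, h']⟩
    · rw [hs] at h'; simp at h'

private lemma reach (hn : 3 ≤ n) (T : PolygonTiling n) :
    ∀ m (Q : Finset (ZMod n)) (a : ZMod n), Q ∈ T.tiles → a ∈ Q →
    (cnext n Q a - a).val = m → ∃ x k, strandSeq n T x k = some (Q, a) := by
  intro m
  induction m using Nat.strong_induction_on with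
  | _ m IH =>
  intro Q a hQ ha hm
  have hcard := T.three_le Q hQ
  obtain ⟨hbQ, hba, _, _, _, _, _, _, _, harc, _, _, _, _, _⟩ := step_facts hn hcard ha
  set b := cnext n Q a with hbdef
  by_cases hb1 : b = a + 1
  · refine ⟨a, 0, ?_⟩
    rw [strandSeq_zero]
    have hxne : a ≠ a + 1 := by
      intro h
      have h2 : (1 : ZMod n) = 0 := by
        have := left_eq_add.mp h
        exact this
      have := zval_one hn
      rw [h2, ZMod.val_zero] at this
      omega
    have hEdge : Q ∈ T.tiles ∧ IsEdge n Q a (a + 1) :=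
      ⟨hQ, ha, hb1 ▸ hbQ, hxne, hb1 ▸ hbdef⟩
    have huniq := (Classical.choose_spec (T.boundary_edge a)).2
    have hST : Q = startTile n T a := huniq Q hEdge
    rw [← hST]
  · have hne_ab : a ≠ b := Ne.symm hba
    have hEQ : IsEdge n Q a b := ⟨ha, hbQ, hne_ab, hbdef⟩
    obtain ⟨Q', ⟨hQ'm, hQ'ne, hE'⟩, _⟩ := T.diag_shared Q hQ a b hEQ hb1
    obtain ⟨hbQ', haQ', hba', hcna⟩ := hE'
    have hcard' := T.three_le Q' hQ'm
    have harc' : ∀ c ∈ Q', (c - a).val ≤ (b - a).val := by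
      intro c hc
      have h1 := arc_of_cnext hbQ' hc (by omega)
      rw [← hcna] at h1
      exact h1
    obtain ⟨ha2Q, ha2a, hmina⟩ := cnext_spec haQ' hbQ' hba'
    set a2 := cnext n Q' a with ha2def
    have hthird : ∃ c ∈ Q', c ≠ a ∧ c ≠ b := by
      have hsub : ({a, b} : Finset (ZMod n)) ⊆ Q' := by
        intro z hz
        simp at hz
        rcases hz with h | h <;> (rw [h]; assumption)
      have h2 : 1 ≤ (Q' \ ({a, b} : Finset (ZMod n))).card := by
        rw [Finset.card_sdiff_of_subset hsub]
        have h3 : ({a, b} : Finset (ZMod n)).card ≤ 2 :=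
          Finset.card_insert_le _ _ |>.trans (by simp)
        omega
      obtain ⟨c, hc⟩ := Finset.card_pos.mp
        (show 0 < (Q' \ ({a, b} : Finset (ZMod n))).card by omega)
      simp only [Finset.mem_sdiff, Finset.mem_insert, Finset.mem_singleton] at hc
      exact ⟨c, hc.1, fun h => hc.2 (Or.inl h), fun h => hc.2 (Or.inr h)⟩
    have ha2b : a2 ≠ b := by
      intro h
      obtain ⟨c, hc, hca, hcb⟩ := hthird
      have h1 := hmina c hc hca
      rw [h] at h1
      have h2 := harc' c hc
      exact hcb (zval_sub_inj (w := a) (le_antisymm h2 h1))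
    obtain ⟨hb2Q, hb2ne, hminb2⟩ := cnext_spec ha2Q hbQ' (Ne.symm ha2b)
    have hmeas : (cnext n Q' a2 - a2).val < (b - a).val := by
      have h1 := hminb2 b hbQ' (Ne.symm ha2b)
      have h2 : (b - a2).val = (b - a).val - (a2 - a).val := by
        have e : b - a2 = (b - a) - (a2 - a) := by ring
        rw [e, zval_sub_of_le (harc' a2 ha2Q)]
      have h3 : 0 < (a2 - a).val := zval_pos_of_ne ha2a
      have h4 : 0 < (b - a).val := zval_pos_of_ne hba
      omega
    obtain ⟨x, k, hseq⟩ := IH _ (by rw [← hm]; exact hmeas) Q' a2 hQ'm ha2Q rfl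
    refine ⟨x, k + 1, ?_⟩
    have hterm : a ≠ b + 1 := by
      intro h
      have h1 : (a - b).val = 1 := by
        rw [h, add_sub_cancel_left]
        exact zval_one hn
      have h2 := card_le_of_val_le (S := Q) (w := b) (B := 1)
        (fun c hc => by have := harc c hc; omega)
      omega
    have hQQ' : Q ≠ Q' := by
      intro h
      apply ha2b
      rw [ha2def, ← h, ← hbdef]
    have hex2 : ∃ Q₂, Q₂ ∈ T.tiles ∧ Q₂ ≠ Q' ∧ IsEdge n Q₂ a b := ⟨Q, hQ, hQQ', hEQ⟩
    have hstep : scottStep n T (Q', a2) = Sum.inl (Q, a) := by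
      have hp : cprev n Q' a2 = a := cprev_eq_cnext haQ' ha2Q ha2a ha2def.symm
      have hpp : cprev n Q' a = b := cprev_eq_cnext hbQ' haQ' (Ne.symm hba') hcna.symm
      rw [scottStep_eq, hp, hpp, if_neg hterm, dif_pos hex2]
      obtain ⟨Qu, hQu, huni⟩ := T.diag_shared Q' hQ'm b a ⟨hbQ', haQ', hba', hcna⟩ hterm
      have e1 : Classical.choose hex2 = Qu := huni _ (Classical.choose_spec hex2)
      have e2 : Q = Qu := huni _ ⟨hQ, hQQ', hEQ⟩
      rw [e1, ← e2]
    exact strandSeq_succ_of T x k hseq hstep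

private lemma seqlem (hn : 3 ≤ n) (T : PolygonTiling n) (x : ZMod n) :
    ∀ k (Q : Finset (ZMod n)) (a : ZMod n), strandSeq n T x (k + 1) = some (Q, a) →
    ∃ V : Finset (Finset (ZMod n)), V ⊆ T.tiles ∧ V.card = k + 1 ∧
      Q ∈ T.tiles ∧ a ∈ Q ∧ 1 ≤ pv x (cnext n Q a) ∧
      pv x (cnext n Q a) + (a - cnext n Q a).val = pv' x a ∧
      (∀ R ∈ V, ∃ c ∈ R, pv' x a < pv' x c) ∧
      scottRun n T T.tiles.card (startTile n T x, x) =
        scottRun n T (T.tiles.card - (k + 1)) (Q, a) := by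
  intro k
  induction k with
  | zero =>
    intro Q a hseq
    obtain ⟨s, hs0, hstep0⟩ := strandSeq_succ_inv T x 0 hseq
    rw [strandSeq_zero] at hs0
    have hs0' : s = (startTile n T x, x) := by
      injection hs0.symm with h
    subst hs0'
    obtain ⟨hSm, hxS, hb1, hbv, hH⟩ := start_step hn T x
    set S := startTile n T x with hSdef
    have hScard := T.three_le S hSm
    obtain ⟨hcont, hsplit⟩ := step_cases hn T x hSm hxS hb1 hH
    rcases hsplit with ⟨y, hstep, _⟩ |
      ⟨Q', a', hstep, hQ'm, ha', ha'x, hlb, hb1', hH', hlt', htri'⟩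
    · rw [hstep0] at hstep
      simp at hstep
    · rw [hstep0] at hstep
      have hQa : Q = Q' ∧ a = a' := by
        have := Sum.inl.inj hstep
        exact ⟨congrArg Prod.fst this, congrArg Prod.snd this⟩
      obtain ⟨rfl, rfl⟩ := hQa
      have hfuel1 : 1 ≤ T.tiles.card := Finset.card_pos.mpr ⟨S, hSm⟩
      refine ⟨{S}, Finset.singleton_subset_iff.mpr hSm, Finset.card_singleton S,
        hQ'm, ha', hb1', hH', ?_, ?_⟩
      · intro R hR
        rw [Finset.mem_singleton] at hR
        subst hR
        refine ⟨x, hxS, ?_⟩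
        rw [pv'_eq ha'x, show pv' x x = n from if_pos rfl]
        exact pv_lt x a
      · obtain ⟨f, hf⟩ : ∃ f, T.tiles.card = f + 1 := ⟨T.tiles.card - 1, by omega⟩
        rw [hf]
        rw [scottRun_succ_inl hstep0]
        norm_num
  | succ k IHk =>
    intro Q a hseq
    obtain ⟨s, hsk, hstepk⟩ := strandSeq_succ_inv T x (k + 1) hseq
    obtain ⟨Q1, a1⟩ := s
    obtain ⟨V, hVsub, hVcard, hQ1m, ha1, hb11, hH1, hVc, hcomp⟩ := IHk Q1 a1 hsk
    obtain ⟨hcont, hsplit⟩ := step_cases hn T x hQ1m ha1 hb11 hH1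
    have hQ1notV : Q1 ∉ V := by
      intro hQV
      obtain ⟨c, hc, hlt⟩ := hVc Q1 hQV
      have := hcont c hc
      omega
    have hins : insert Q1 V ⊆ T.tiles := Finset.insert_subset hQ1m hVsub
    have hinscard : (insert Q1 V).card = k + 2 := by
      rw [Finset.card_insert_of_notMem hQ1notV, hVcard]
    have hk2 : k + 2 ≤ T.tiles.card := by
      have := Finset.card_le_card hins
      omega
    rcases hsplit with ⟨y, hstep, _⟩ |
      ⟨Q', a', hstep, hQ'm, ha', ha'x, hlb, hb1', hH', hlt', htri'⟩
    · rw [hstepk] at hstep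
      simp at hstep
    · rw [hstepk] at hstep
      have hQa : Q = Q' ∧ a = a' := by
        have := Sum.inl.inj hstep
        exact ⟨congrArg Prod.fst this, congrArg Prod.snd this⟩
      obtain ⟨rfl, rfl⟩ := hQa
      refine ⟨insert Q1 V, hins, hinscard, hQ'm, ha', hb1', hH', ?_, ?_⟩
      · intro R hR
        rcases Finset.mem_insert.mp hR with rfl | hRV
        · exact ⟨a1, ha1, by omega⟩
        · obtain ⟨c, hc, h⟩ := hVc R hRV
          exact ⟨c, hc, by omega⟩
      · rw [hcomp]
        obtain ⟨f, hf⟩ : ∃ f, T.tiles.card - (k + 1) = f + 1 :=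
          ⟨T.tiles.card - (k + 2), by omega⟩
        rw [hf, scottRun_succ_inl hstepk]
        congr 1
        omega

end Aux

theorem stmt11 (n : ℕ) (hn : 3 ≤ n) (T : PolygonTiling n) :
    IsTriangulation n T ↔ scott n T = fun i => i + 2 := by
  haveI : NeZero n := ⟨by omega⟩
  constructor
  · intro htr
    funext x
    have h2 := (scott_val hn T x).2 htr
    have h3 : (scott n T x - x).val = (2 : ZMod n).val := by
      rw [zval_two hn]; exact h2
    have h4 : scott n T x - x = 2 := zval_eq_of _ _ h3
    have h5 := sub_eq_iff_eq_add.mp h4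
    show scott n T x = x + 2
    rw [h5, add_comm]
  · intro hsc Q hQ
    by_contra hne
    have hQcard := T.three_le Q hQ
    have hQ4 : 4 ≤ Q.card := by omega
    obtain ⟨a0, ha0⟩ := Finset.card_pos.mp (show 0 < Q.card by omega)
    obtain ⟨x, k, hseq⟩ := reach hn T _ Q a0 hQ ha0 rfl
    have hsx : pv x (scott n T x) = 2 := by
      have h0 := congrFun hsc x
      show (scott n T x - x).val = 2
      rw [h0]
      show (x + 2 - x).val = 2
      rw [add_sub_cancel_left, zval_two hn]
    cases k with
    | zero =>
      rw [strandSeq_zero] at hseq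
      have hQS : startTile n T x = Q := congrArg Prod.fst (Option.some.inj hseq)
      have h1 := (scott_val hn T x).1
      rw [hQS] at h1
      omega
    | succ k =>
      obtain ⟨V, hVsub, hVcard, hQm, ha, hb1, hH, hVc, hcomp⟩ := seqlem hn T x k Q a0 hseq
      have hk1 : k + 1 ≤ T.tiles.card := by
        have := Finset.card_le_card hVsub
        omega
      have hrec := runl hn T x (pv' x a0) (T.tiles.card - (k + 1)) V Q a0 rfl hVsub
        (by omega) hQm ha hb1 hH hVc
      have h1 := hrec.1
      rw [← hcomp] at h1
      have h2 : scott n T x = scottRun n T T.tiles.card (startTile n T x, x) := rfl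
      rw [← h2] at h1
      omega
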